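/- Let G be a crown-free graph containing a relaxed crown (H, I): I is independent, H = N(I), and for every v ∈ H there is a matching between H \ {v} and I saturating H \ {v}. Let G' be obtained from G by removing H ∪ I and adding a new vertex w adjacent to all vertices in (⋃_{u∈H} N(u)) \ (H ∪ I). Then mm(G) = mm(G') + |H| - 1. -/

import Mathlib

/-- A matching in a simple graph `G`, given as a finite set of edges of `G`
that are pairwise vertex-disjoint. -/
def IsMatching {V : Type*} (G : SimpleGraph V) (M : Finset (Sym2 V)) : Prop :=
  (∀ e ∈ M, e ∈ G.edgeSet) ∧
    ∀ e ∈ M, ∀ f ∈ M, e ≠ f → ∀ v, v ∈ e → v ∉ f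

/-- The maximum cardinality of a matching in `G`. -/
noncomputable def mm {V : Type*} (G : SimpleGraph V) : ℕ :=
  sSup {n | ∃ M : Finset (Sym2 V), IsMatching G M ∧ M.card = n}

/-- `(H, I)` is a (nonempty) crown of `G`: `I` is a nonempty independent set,
`H = N(I)`, and there is a matching between `H` and `I` saturating all of `H`. -/
def IsCrown {V : Type*} [DecidableEq V] (G : SimpleGraph V) (H I : Finset V) : Prop :=
  I.Nonempty ∧
  (∀ a ∈ I, ∀ b ∈ I, ¬ G.Adj a b) ∧
  (∀ b, b ∈ H ↔ ∃ a ∈ I, G.Adj a b) ∧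
  ∃ M : Finset (Sym2 V), IsMatching G M ∧
    (∀ e ∈ M, ∃ a ∈ H, ∃ b ∈ I, e = s(a, b)) ∧
    ∀ a ∈ H, ∃ e ∈ M, a ∈ e

/-- The graph obtained from `G` by removing all vertices of `H ∪ I` and adding a new
vertex (`none`) adjacent to all remaining vertices having a neighbor in `H`. -/
def relaxedCrownReduced {V : Type*} [DecidableEq V] (G : SimpleGraph V)
    (H I : Finset V) : SimpleGraph (Option V) where
  Adj a b :=
    match a, b with
    | some a, some b => G.Adj a b ∧ a ∉ H ∧ a ∉ I ∧ b ∉ H ∧ b ∉ I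
    | some a, none => (a ∉ H ∧ a ∉ I) ∧ ∃ u ∈ H, G.Adj u a
    | none, some b => (b ∉ H ∧ b ∉ I) ∧ ∃ u ∈ H, G.Adj u b
    | none, none => False
  symm := by
    constructor
    rintro (_ | a) (_ | b) h
    · exact h.elim
    · exact h
    · exact h
    · obtain ⟨h1, h2, h3, h4, h5⟩ := h
      exact ⟨h1.symm, h4, h5, h2, h3⟩
  loopless := by
    constructor
    rintro (_ | a) h
    · exact h.elim
    · exact G.irrefl h.1

lemma sym2_exists {V : Type*} (e : Sym2 V) : ∃ x y, e = s(x, y) :=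
  Sym2.ind (fun x y => ⟨x, y, rfl⟩) e

lemma mm_set_ne {V : Type*} (G : SimpleGraph V) :
    Set.Nonempty {n | ∃ M : Finset (Sym2 V), IsMatching G M ∧ M.card = n} :=
  ⟨0, ∅, ⟨by simp, by simp⟩, rfl⟩

lemma mm_set_bdd {V : Type*} [Fintype V] [DecidableEq V] (G : SimpleGraph V) :
    BddAbove {n | ∃ M : Finset (Sym2 V), IsMatching G M ∧ M.card = n} := by
  refine ⟨Fintype.card (Sym2 V), ?_⟩
  rintro n ⟨M, _, rfl⟩
  exact Finset.card_le_univ M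

lemma le_mm {V : Type*} [Fintype V] [DecidableEq V] {G : SimpleGraph V}
    {M : Finset (Sym2 V)} (h : IsMatching G M) : M.card ≤ mm G :=
  le_csSup (mm_set_bdd G) ⟨M, h, rfl⟩

lemma mm_le {V : Type*} {G : SimpleGraph V} {n : ℕ}
    (h : ∀ M : Finset (Sym2 V), IsMatching G M → M.card ≤ n) : mm G ≤ n :=
  csSup_le (mm_set_ne G) (by rintro m ⟨M, hM, rfl⟩; exact h M hM)

lemma exists_mm {V : Type*} [Fintype V] [DecidableEq V] (G : SimpleGraph V) :
    ∃ M : Finset (Sym2 V), IsMatching G M ∧ M.card = mm G :=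
  Nat.sSup_mem (mm_set_ne G) (mm_set_bdd G)

lemma card_le_of_sat {V : Type*} [DecidableEq V] (M : Finset (Sym2 V)) (S : Finset V)
    (hsat : ∀ a ∈ S, ∃ e ∈ M, a ∈ e)
    (huniq : ∀ e ∈ M, ∀ a ∈ S, ∀ b ∈ S, a ∈ e → b ∈ e → a = b) :
    S.card ≤ M.card := by
  classical
  refine Finset.card_le_card_of_injOn
    (fun a => if h : ∃ e ∈ M, a ∈ e then h.choose else s(a, a)) ?_ ?_
  · intro a ha
    simp only [dif_pos (hsat a ha)]
    exact (hsat a ha).choose_spec.1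
  · intro a ha b hb hab
    simp only [Finset.mem_coe] at ha hb
    simp only [dif_pos (hsat a ha), dif_pos (hsat b hb)] at hab
    have h1 := (hsat a ha).choose_spec
    have h2 := (hsat b hb).choose_spec
    rw [hab] at h1
    exact huniq _ h2.1 a ha b hb h1.2 h2.2

/-- Relaxed crown rule: if `G` is crown-free and `(H, I)` is a (nonempty) relaxed
crown (`I` independent, `H = N(I)`, and for every `v ∈ H` there is a matching
between `H \ {v}` and `I` saturating `H \ {v}`), and `G'` is obtained by removing
`H ∪ I` and adding a new vertex `w` adjacent to all former outside neighbors of `H`,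
then `mm(G) = mm(G') + |H| - 1`. -/
theorem stmt8 {V : Type*} [Fintype V] [DecidableEq V] (G : SimpleGraph V)
    (H I : Finset V)
    (hcf : ∀ H' I' : Finset V, ¬ IsCrown G H' I')
    (hIne : I.Nonempty)
    (hind : ∀ a ∈ I, ∀ b ∈ I, ¬ G.Adj a b)
    (hN : ∀ b, b ∈ H ↔ ∃ a ∈ I, G.Adj a b)
    (hrel : ∀ v ∈ H, ∃ M : Finset (Sym2 V), IsMatching G M ∧
      (∀ e ∈ M, ∃ a ∈ H, a ≠ v ∧ ∃ b ∈ I, e = s(a, b)) ∧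
      ∀ a ∈ H, a ≠ v → ∃ e ∈ M, a ∈ e) :
    mm G = mm (relaxedCrownReduced G H I) + H.card - 1 := by
  classical
  obtain ⟨d, hdI⟩ := hIne
  set G' := relaxedCrownReduced G H I with hG'def
  have hHI : ∀ x, x ∈ H → x ∉ I := by
    intro x hxH hxI
    obtain ⟨a, haI, hadj⟩ := (hN x).1 hxH
    exact hind a haI x hxI hadj
  have hHne : H.Nonempty := by
    rcases H.eq_empty_or_nonempty with h0 | h
    · exfalso
      refine hcf H I ⟨⟨d, hdI⟩, hind, hN, ∅, ⟨by simp, by simp⟩, by simp, ?_⟩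
      intro a ha
      rw [h0] at ha
      exact absurd ha (Finset.notMem_empty a)
    · exact h
  have hH1 : 1 ≤ H.card := Finset.card_pos.mpr hHne
  -- packaged relaxed matchings
  have hMuPack : ∀ u ∈ H, ∃ Mu : Finset (Sym2 V), IsMatching G Mu ∧
      H.card - 1 ≤ Mu.card ∧
      (∀ e ∈ Mu, ∃ a, (a ∈ H ∧ a ≠ u) ∧ ∃ b ∈ I, e = s(a, b)) := by
    intro u hu
    obtain ⟨Mu, hm, hE, hS⟩ := hrel u hu
    have hE' : ∀ e ∈ Mu, ∃ a, (a ∈ H ∧ a ≠ u) ∧ ∃ b ∈ I, e = s(a, b) := by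
      intro e he
      obtain ⟨a, haH, hau, b, hbI, heq⟩ := hE e he
      exact ⟨a, ⟨haH, hau⟩, b, hbI, heq⟩
    refine ⟨Mu, hm, ?_, hE'⟩
    have hcard : (H.erase u).card ≤ Mu.card := by
      apply card_le_of_sat
      · intro a ha
        exact hS a (Finset.mem_of_mem_erase ha) (Finset.ne_of_mem_erase ha)
      · intro e he a ha b hb hae hbe
        obtain ⟨a', _, b', hb'I, rfl⟩ := hE' e he
        have haH := Finset.mem_of_mem_erase ha
        have hbH := Finset.mem_of_mem_erase hb
        have h1 : a = a' := by
          rcases Sym2.mem_iff.mp hae with h | h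
          · exact h
          · exact absurd (h ▸ hb'I) (hHI a haH)
        have h2 : b = a' := by
          rcases Sym2.mem_iff.mp hbe with h | h
          · exact h
          · exact absurd (h ▸ hb'I) (hHI b hbH)
        rw [h1, h2]
    rwa [Finset.card_erase_of_mem hu] at hcard
  -- vertex facts about packaged matchings
  have hMuVert : ∀ u (Mu : Finset (Sym2 V)),
      (∀ e ∈ Mu, ∃ a, (a ∈ H ∧ a ≠ u) ∧ ∃ b ∈ I, e = s(a, b)) →
      ∀ e ∈ Mu, ∀ v, v ∈ e → (v ∈ H ∧ v ≠ u) ∨ v ∈ I := by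
    intro u Mu hE e he v hv
    obtain ⟨a, ha, b, hbI, rfl⟩ := hE e he
    rcases Sym2.mem_iff.mp hv with rfl | rfl
    · exact Or.inl ha
    · exact Or.inr hbI
  -- ===== lower bound : mm G' + H.card - 1 ≤ mm G =====
  have hge : mm G' + H.card - 1 ≤ mm G := by
    obtain ⟨M', hM', hcard'⟩ := exists_mm G'
    set φ : Sym2 (Option V) → Sym2 V := Sym2.map (fun o => o.getD d) with hφ
    set Mns := M'.filter (fun e => (none : Option V) ∉ e) with hMnsdef
    have hMnsM : ∀ e ∈ Mns, e ∈ M' ∧ (none : Option V) ∉ e := by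
      intro e he
      simpa using Finset.mem_filter.mp he
    have hform : ∀ e ∈ Mns, ∃ a b, e = s(some a, some b) ∧ G.Adj a b ∧
        a ∉ H ∧ a ∉ I ∧ b ∉ H ∧ b ∉ I := by
      intro e he
      obtain ⟨hem, hnn⟩ := hMnsM e he
      obtain ⟨x, y, rfl⟩ := sym2_exists e
      have hadj : G'.Adj x y := hM'.1 _ hem
      cases x with
      | none => exact absurd (Sym2.mem_iff.mpr (Or.inl rfl)) hnn
      | some a =>
        cases y with
        | none => exact absurd (Sym2.mem_iff.mpr (Or.inr rfl)) hnn
        | some b =>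
          have hadj' : G.Adj a b ∧ a ∉ H ∧ a ∉ I ∧ b ∉ H ∧ b ∉ I := hadj
          exact ⟨a, b, rfl, hadj'.1, hadj'.2.1, hadj'.2.2.1, hadj'.2.2.2.1, hadj'.2.2.2.2⟩
    have hφpair : ∀ a b : V, φ s(some a, some b) = s(a, b) := by
      intro a b
      simp [hφ, Sym2.map_pair_eq]
    have hinv : ∀ e ∈ Mns, Sym2.map some (φ e) = e := by
      intro e he
      obtain ⟨a, b, rfl, _⟩ := hform e he
      rw [hφpair, Sym2.map_pair_eq]
    have hAinj : Set.InjOn φ ↑Mns := by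
      intro e1 h1 e2 h2 heq
      rw [← hinv e1 (Finset.mem_coe.mp h1), ← hinv e2 (Finset.mem_coe.mp h2), heq]
    set A := Mns.image φ with hAdef
    have hAcard : A.card = Mns.card := Finset.card_image_of_injOn hAinj
    have hAprop : ∀ e ∈ A, ∃ a b, e = s(a, b) ∧ G.Adj a b ∧
        a ∉ H ∧ a ∉ I ∧ b ∉ H ∧ b ∉ I ∧ s(some a, some b) ∈ Mns := by
      intro e he
      obtain ⟨f, hf, rfl⟩ := Finset.mem_image.mp he
      obtain ⟨a, b, rfl, h1, h2, h3, h4, h5⟩ := hform f hf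
      exact ⟨a, b, (hφpair a b), h1, h2, h3, h4, h5, hf⟩
    have hAedge : ∀ e ∈ A, e ∈ G.edgeSet := by
      intro e he
      obtain ⟨a, b, rfl, h1, _⟩ := hAprop e he
      exact h1
    have hAout : ∀ e ∈ A, ∀ v, v ∈ e → v ∉ H ∧ v ∉ I := by
      intro e he v hv
      obtain ⟨a, b, rfl, _, h2, h3, h4, h5, _⟩ := hAprop e he
      rcases Sym2.mem_iff.mp hv with rfl | rfl
      · exact ⟨h2, h3⟩
      · exact ⟨h4, h5⟩
    have hAsome : ∀ e ∈ A, ∀ v, v ∈ e → ∃ f ∈ Mns, (some v) ∈ f ∧ φ f = e := by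
      intro e he v hv
      obtain ⟨a, b, rfl, _, _, _, _, _, hf⟩ := hAprop e he
      rcases Sym2.mem_iff.mp hv with rfl | rfl
      · exact ⟨s(some v, some b), hf, Sym2.mem_iff.mpr (Or.inl rfl), hφpair v b⟩
      · exact ⟨s(some a, some v), hf, Sym2.mem_iff.mpr (Or.inr rfl), hφpair a v⟩
    have hAdisj : ∀ e ∈ A, ∀ f ∈ A, e ≠ f → ∀ v, v ∈ e → v ∉ f := by
      intro e he f hf hef v hve hvf
      obtain ⟨f1, hf1, hv1, he1⟩ := hAsome e he v hve
      obtain ⟨f2, hf2, hv2, he2⟩ := hAsome f hf v hvf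
      have hne : f1 ≠ f2 := by
        intro h
        exact hef (by rw [← he1, ← he2, h])
      exact hM'.2 f1 (hMnsM f1 hf1).1 f2 (hMnsM f2 hf2).1 hne (some v) hv1 hv2
    by_cases hw : ∃ e ∈ M', (none : Option V) ∈ e
    · -- w is covered by M'
      obtain ⟨e0, he0M, he0n⟩ := hw
      have he0form : ∃ b0, ((b0 ∉ H ∧ b0 ∉ I) ∧ ∃ u ∈ H, G.Adj u b0) ∧
          e0 = s((none : Option V), some b0) := by
        obtain ⟨x, y, rfl⟩ := sym2_exists e0
        have hadj : G'.Adj x y := hM'.1 _ he0M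
        cases x with
        | none =>
          cases y with
          | none => exact (hadj : False).elim
          | some b => exact ⟨b, hadj, rfl⟩
        | some a =>
          cases y with
          | none => exact ⟨a, hadj, Sym2.eq_swap⟩
          | some b =>
            exfalso
            have := Sym2.mem_iff.mp he0n
            simp at this
      obtain ⟨b0, ⟨⟨hb0H, hb0I⟩, u, huH, hub0⟩, he0eq⟩ := he0form
      obtain ⟨Mu, hMuM, hMucard, hMuform⟩ := hMuPack u huH
      have hMuvert := hMuVert u Mu hMuform
      set B := insert s(u, b0) Mu with hBdef
      have hub0mem : (u : V) ∈ s(u, b0) := Sym2.mem_iff.mpr (Or.inl rfl)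
      have hsub0 : s(u, b0) ∉ Mu := by
        intro hmem
        rcases hMuvert _ hmem u hub0mem with ⟨_, h⟩ | h
        · exact h rfl
        · exact hHI u huH h
      have hkey : ∀ f ∈ Mu, ∀ v, v ∈ s(u, b0) → v ∉ f := by
        intro f hf v hv hvf
        rcases hMuvert f hf v hvf with ⟨hvH, hvu⟩ | hvI
        · rcases Sym2.mem_iff.mp hv with rfl | rfl
          · exact hvu rfl
          · exact hb0H hvH
        · rcases Sym2.mem_iff.mp hv with rfl | rfl
          · exact hHI _ huH hvI
          · exact hb0I hvI
      have hBdisj : ∀ e ∈ B, ∀ f ∈ B, e ≠ f → ∀ v, v ∈ e → v ∉ f := by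
        intro e he f hf hef v hve hvf
        rcases Finset.mem_insert.mp he with rfl | h1
        · rcases Finset.mem_insert.mp hf with h2 | h2
          · exact hef h2.symm
          · exact hkey f h2 v hve hvf
        · rcases Finset.mem_insert.mp hf with rfl | h2
          · exact hkey e h1 v hvf hve
          · exact hMuM.2 e h1 f h2 hef v hve hvf
      have hBvert : ∀ e ∈ B, ∀ v, v ∈ e → ((v ∈ H ∨ v ∈ I) ∨ v = b0) := by
        intro e he v hv
        rcases Finset.mem_insert.mp he with rfl | h
        · rcases Sym2.mem_iff.mp hv with rfl | rfl
          · exact Or.inl (Or.inl huH)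
          · exact Or.inr rfl
        · rcases hMuvert e h v hv with ⟨h1, _⟩ | h1
          · exact Or.inl (Or.inl h1)
          · exact Or.inl (Or.inr h1)
      have hABdisj : ∀ e ∈ A, ∀ f ∈ B, ∀ v, v ∈ e → v ∉ f := by
        intro e he f hf v hve hvf
        have hout := hAout e he v hve
        rcases hBvert f hf v hvf with (h | h) | rfl
        · exact hout.1 h
        · exact hout.2 h
        · obtain ⟨f1, hf1, hv1, _⟩ := hAsome e he v hve
          have hne : f1 ≠ e0 := by
            intro h
            apply (hMnsM f1 hf1).2
            rw [h, he0eq]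
            exact Sym2.mem_iff.mpr (Or.inl rfl)
          exact hM'.2 f1 (hMnsM f1 hf1).1 e0 he0M hne (some v) hv1
            (by rw [he0eq]; exact Sym2.mem_iff.mpr (Or.inr rfl))
      have hmatch : IsMatching G (A ∪ B) := by
        constructor
        · intro e he
          rcases Finset.mem_union.mp he with h | h
          · exact hAedge e h
          · rcases Finset.mem_insert.mp h with rfl | h2
            · exact G.mem_edgeSet.mpr hub0
            · exact hMuM.1 e h2
        · intro e he f hf hef v hve hvf
          rcases Finset.mem_union.mp he with h1 | h1 <;>
            rcases Finset.mem_union.mp hf with h2 | h2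
          · exact hAdisj e h1 f h2 hef v hve hvf
          · exact hABdisj e h1 f h2 v hve hvf
          · exact hABdisj f h2 e h1 v hvf hve
          · exact hBdisj e h1 f h2 hef v hve hvf
      have hABfin : Disjoint A B := by
        rw [Finset.disjoint_left]
        intro e heA heB
        obtain ⟨a, b, rfl, _⟩ := hAprop e heA
        exact hABdisj _ heA _ heB a (Sym2.mem_iff.mpr (Or.inl rfl))
          (Sym2.mem_iff.mpr (Or.inl rfl))
      have hBcard : B.card = Mu.card + 1 := Finset.card_insert_of_notMem hsub0
      have hMnseq : Mns = M'.erase e0 := by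
        ext e
        simp only [hMnsdef, Finset.mem_filter, Finset.mem_erase]
        constructor
        · rintro ⟨heM, hnn⟩
          refine ⟨?_, heM⟩
          intro h
          apply hnn
          rw [h, he0eq]
          exact Sym2.mem_iff.mpr (Or.inl rfl)
        · rintro ⟨hne, heM⟩
          exact ⟨heM, fun hn => hM'.2 e heM e0 he0M hne none hn (he0eq ▸ Sym2.mem_iff.mpr (Or.inl rfl))⟩
      have hMnscard : Mns.card = M'.card - 1 := by
        rw [hMnseq, Finset.card_erase_of_mem he0M]
      have hM'pos : 1 ≤ M'.card := Finset.card_pos.mpr ⟨e0, he0M⟩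
      have hcardAB : (A ∪ B).card = Mns.card + Mu.card + 1 := by
        rw [Finset.card_union_of_disjoint hABfin, hAcard, hBcard]
        omega
      have hle := le_mm hmatch
      omega
    · -- w is not covered
      push_neg at hw
      have hMnseq : Mns = M' := by
        rw [hMnsdef]
        exact Finset.filter_true_of_mem hw
      obtain ⟨u, hu⟩ := hHne
      obtain ⟨Mu, hMuM, hMucard, hMuform⟩ := hMuPack u hu
      have hMuvert := hMuVert u Mu hMuform
      have hABdisj : ∀ e ∈ A, ∀ f ∈ Mu, ∀ v, v ∈ e → v ∉ f := by
        intro e he f hf v hve hvf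
        have hout := hAout e he v hve
        rcases hMuvert f hf v hvf with ⟨h1, _⟩ | h1
        · exact hout.1 h1
        · exact hout.2 h1
      have hmatch : IsMatching G (A ∪ Mu) := by
        constructor
        · intro e he
          rcases Finset.mem_union.mp he with h | h
          · exact hAedge e h
          · exact hMuM.1 e h
        · intro e he f hf hef v hve hvf
          rcases Finset.mem_union.mp he with h1 | h1 <;>
            rcases Finset.mem_union.mp hf with h2 | h2
          · exact hAdisj e h1 f h2 hef v hve hvf
          · exact hABdisj e h1 f h2 v hve hvf
          · exact hABdisj f h2 e h1 v hvf hve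
          · exact hMuM.2 e h1 f h2 hef v hve hvf
      have hABfin : Disjoint A Mu := by
        rw [Finset.disjoint_left]
        intro e heA heB
        obtain ⟨a, b, rfl, _⟩ := hAprop e heA
        exact hABdisj _ heA _ heB a (Sym2.mem_iff.mpr (Or.inl rfl))
          (Sym2.mem_iff.mpr (Or.inl rfl))
      have hcardAB : (A ∪ Mu).card = M'.card + Mu.card := by
        rw [Finset.card_union_of_disjoint hABfin, hAcard, hMnseq]
      have hle := le_mm hmatch
      omega
  -- ===== upper bound : mm G ≤ mm G' + H.card - 1 =====
  have hle : mm G ≤ mm G' + H.card - 1 := by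
    apply mm_le
    intro M hM
    set P : Sym2 V → Prop := fun e => ∃ v ∈ e, v ∈ H ∨ v ∈ I with hPdef
    set Mbd := M.filter P with hMbddef
    set Min := M.filter (fun e => ¬ P e) with hMindef
    have hsplit : Mbd.card + Min.card = M.card :=
      Finset.card_filter_add_card_filter_not (p := P)
    have hMbd_mem : ∀ e ∈ Mbd, e ∈ M ∧ P e := fun e he => Finset.mem_filter.mp he
    have hMin_mem : ∀ e ∈ Min, e ∈ M ∧ ¬ P e := fun e he => Finset.mem_filter.mp he
    have hMbdH : ∀ e ∈ Mbd, ∃ h ∈ H, h ∈ e := by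
      intro e he
      obtain ⟨heM, hPe⟩ := hMbd_mem e he
      obtain ⟨v, hve, hvHI⟩ := hPe
      rcases hvHI with hvH | hvI
      · exact ⟨v, hvH, hve⟩
      · obtain ⟨x, y, rfl⟩ := sym2_exists e
        have hadj : G.Adj x y := hM.1 _ heM
        rcases Sym2.mem_iff.mp hve with rfl | rfl
        · exact ⟨y, (hN y).2 ⟨v, hvI, hadj⟩, Sym2.mem_iff.mpr (Or.inr rfl)⟩
        · exact ⟨x, (hN x).2 ⟨v, hvI, hadj.symm⟩, Sym2.mem_iff.mpr (Or.inl rfl)⟩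
    set F : Sym2 V → V := fun e => if h : ∃ v, v ∈ H ∧ v ∈ e then h.choose else d with hFdef
    have hF : ∀ e ∈ Mbd, F e ∈ H ∧ F e ∈ e := by
      intro e he
      obtain ⟨h, hH, hhe⟩ := hMbdH e he
      have hex : ∃ v, v ∈ H ∧ v ∈ e := ⟨h, hH, hhe⟩
      simp only [hFdef, dif_pos hex]
      exact hex.choose_spec
    have hFinj : Set.InjOn F ↑Mbd := by
      intro e1 h1 e2 h2 heq
      by_contra hne
      have hf1 := hF e1 (Finset.mem_coe.mp h1)
      have hf2 := hF e2 (Finset.mem_coe.mp h2)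
      exact hM.2 e1 (hMbd_mem e1 (Finset.mem_coe.mp h1)).1 e2
        (hMbd_mem e2 (Finset.mem_coe.mp h2)).1 hne (F e1) hf1.2 (heq ▸ hf2.2)
    have hMbdcard : Mbd.card ≤ H.card :=
      Finset.card_le_card_of_injOn F (fun e he => (hF e he).1) hFinj
    have hMinform : ∀ e ∈ Min, ∃ x y, e = s(x, y) ∧ G.Adj x y ∧
        x ∉ H ∧ x ∉ I ∧ y ∉ H ∧ y ∉ I := by
      intro e he
      obtain ⟨heM, hnP⟩ := hMin_mem e he
      obtain ⟨x, y, rfl⟩ := sym2_exists e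
      have hadj : G.Adj x y := hM.1 _ heM
      have hno : ∀ v, v ∈ s(x, y) → v ∉ H ∧ v ∉ I := by
        intro v hv
        constructor
        · intro hc; exact hnP ⟨v, hv, Or.inl hc⟩
        · intro hc; exact hnP ⟨v, hv, Or.inr hc⟩
      have hx := hno x (Sym2.mem_iff.mpr (Or.inl rfl))
      have hy := hno y (Sym2.mem_iff.mpr (Or.inr rfl))
      exact ⟨x, y, rfl, hadj, hx.1, hx.2, hy.1, hy.2⟩
    set ψ : Sym2 V → Sym2 (Option V) := Sym2.map some with hψdef
    have hψpair : ∀ a b : V, ψ s(a, b) = s(some a, some b) := by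
      intro a b
      simp [hψdef, Sym2.map_pair_eq]
    have hψinj : Function.Injective ψ := Sym2.map.injective (Option.some_injective V)
    set A := Min.image ψ with hAdef
    have hAcard : A.card = Min.card := Finset.card_image_of_injective _ hψinj
    have hAprop : ∀ e ∈ A, ∃ x y, e = s(some x, some y) ∧ (G.Adj x y ∧
        x ∉ H ∧ x ∉ I ∧ y ∉ H ∧ y ∉ I) ∧ s(x, y) ∈ Min := by
      intro e he
      obtain ⟨f, hf, rfl⟩ := Finset.mem_image.mp he
      obtain ⟨x, y, rfl, h1, h2, h3, h4, h5⟩ := hMinform f hf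
      exact ⟨x, y, hψpair x y, ⟨h1, h2, h3, h4, h5⟩, hf⟩
    have hAsome : ∀ e ∈ A, ∀ v, v ∈ e → ∃ w g, g ∈ Min ∧ w ∈ g ∧ v = some w ∧ ψ g = e := by
      intro e he v hv
      obtain ⟨x, y, rfl, _, hf⟩ := hAprop e he
      rcases Sym2.mem_iff.mp hv with rfl | rfl
      · exact ⟨x, s(x, y), hf, Sym2.mem_iff.mpr (Or.inl rfl), rfl, hψpair x y⟩
      · exact ⟨y, s(x, y), hf, Sym2.mem_iff.mpr (Or.inr rfl), rfl, hψpair x y⟩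
    have hAmatch : IsMatching G' A := by
      constructor
      · intro e he
        obtain ⟨x, y, rfl, had, _⟩ := hAprop e he
        show G'.Adj (some x) (some y)
        exact had
      · intro e he f hf hef v hve hvf
        obtain ⟨w1, g1, hg1, hw1, hv1, hpsi1⟩ := hAsome e he v hve
        obtain ⟨w2, g2, hg2, hw2, hv2, hpsi2⟩ := hAsome f hf v hvf
        have hww : w1 = w2 := Option.some_injective V (hv1.symm.trans hv2)
        subst hww
        have hne : g1 ≠ g2 := by
          intro h
          exact hef (by rw [← hpsi1, ← hpsi2, h])
        exact hM.2 g1 (hMin_mem g1 hg1).1 g2 (hMin_mem g2 hg2).1 hne w1 hw1 hw2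
    by_cases hsmall : Mbd.card ≤ H.card - 1
    · have hle' := le_mm hAmatch
      omega
    · have hMbdeq : Mbd.card = H.card := by omega
      have himg : Mbd.image F = H := by
        apply Finset.eq_of_subset_of_card_le
        · intro h hh
          obtain ⟨e, he, rfl⟩ := Finset.mem_image.mp hh
          exact (hF e he).1
        · rw [Finset.card_image_of_injOn hFinj, hMbdeq]
      have hsurj : ∀ h ∈ H, ∃ e ∈ Mbd, F e = h := by
        intro h hh
        rw [← himg] at hh
        exact Finset.mem_image.mp hh
      have huniqH : ∀ e ∈ Mbd, ∀ h, h ∈ H → h ∈ e → F e = h := by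
        intro e he h hh hhe
        obtain ⟨e', he', hFe'⟩ := hsurj h hh
        have hh'e' : h ∈ e' := hFe' ▸ (hF e' he').2
        by_cases heq : e' = e
        · rw [← heq]; exact hFe'
        · exact absurd hhe (hM.2 e' (hMbd_mem e' he').1 e (hMbd_mem e he).1 heq h hh'e')
      by_cases hout : ∃ e ∈ Mbd, ∃ v ∈ e, v ∉ H ∧ v ∉ I
      · obtain ⟨e0, he0, b0, hb0e, hb0H, hb0I⟩ := hout
        have hHadj : ∃ h ∈ H, G.Adj h b0 := by
          obtain ⟨heM, hPe⟩ := hMbd_mem e0 he0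
          obtain ⟨v, hve, hvHI⟩ := hPe
          obtain ⟨x, y, rfl⟩ := sym2_exists e0
          have hadj : G.Adj x y := hM.1 _ heM
          have hvb0 : v ≠ b0 := by
            intro h
            subst h
            rcases hvHI with h | h
            · exact hb0H h
            · exact hb0I h
          rcases Sym2.mem_iff.mp hb0e with rfl | rfl
          · have hvy : v = y := by
              rcases Sym2.mem_iff.mp hve with h | h
              · exact absurd h hvb0
              · exact h
            subst hvy
            rcases hvHI with h | h
            · exact ⟨v, h, hadj.symm⟩
            · exact absurd ((hN b0).2 ⟨v, h, hadj.symm⟩) hb0H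
          · have hvx : v = x := by
              rcases Sym2.mem_iff.mp hve with h | h
              · exact h
              · exact absurd h hvb0
            subst hvx
            rcases hvHI with h | h
            · exact ⟨v, h, hadj⟩
            · exact absurd ((hN b0).2 ⟨v, h, hadj⟩) hb0H
        obtain ⟨h0, hh0H, hh0b0⟩ := hHadj
        have hwedge : G'.Adj none (some b0) := ⟨⟨hb0H, hb0I⟩, h0, hh0H, hh0b0⟩
        set A' := insert s((none : Option V), some b0) A with hA'def
        have hnotin : s((none : Option V), some b0) ∉ A := by
          intro h
          obtain ⟨x, y, heq, _, _⟩ := hAprop _ h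
          have : (none : Option V) ∈ s(some x, some y) := heq ▸ Sym2.mem_iff.mpr (Or.inl rfl)
          simp at this
        have hnoneA : ∀ e ∈ A, (none : Option V) ∉ e := by
          intro e he hn
          obtain ⟨w, g, _, _, hw, _⟩ := hAsome e he none hn
          cases hw
        have hb0A : ∀ e ∈ A, (some b0) ∉ e := by
          intro e he hb
          obtain ⟨w, g, hg, hwg, hw, _⟩ := hAsome e he (some b0) hb
          have hwb : w = b0 := Option.some_injective V hw.symm
          subst hwb
          have hne : g ≠ e0 := by
            intro h
            exact (hMin_mem g hg).2 (h ▸ (hMbd_mem e0 he0).2)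
          exact hM.2 g (hMin_mem g hg).1 e0 (hMbd_mem e0 he0).1 hne w hwg hb0e
        have hA'match : IsMatching G' A' := by
          constructor
          · intro e he
            rcases Finset.mem_insert.mp he with rfl | h
            · exact G'.mem_edgeSet.mpr hwedge
            · exact hAmatch.1 e h
          · intro e he f hf hef v hve hvf
            have key : ∀ f' ∈ A, ∀ v', v' ∈ s((none : Option V), some b0) → v' ∉ f' := by
              intro f' hf' v' hv' hvf'
              rcases Sym2.mem_iff.mp hv' with rfl | rfl
              · exact hnoneA f' hf' hvf'
              · exact hb0A f' hf' hvf'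
            rcases Finset.mem_insert.mp he with rfl | h1
            · rcases Finset.mem_insert.mp hf with h2 | h2
              · exact hef h2.symm
              · exact key f h2 v hve hvf
            · rcases Finset.mem_insert.mp hf with rfl | h2
              · exact key e h1 v hvf hve
              · exact hAmatch.2 e h1 f h2 hef v hve hvf
        have hA'card : A'.card = Min.card + 1 := by
          rw [hA'def, Finset.card_insert_of_notMem hnotin, hAcard]
        have hle' := le_mm hA'match
        omega
      · have hout' : ∀ e ∈ Mbd, ∀ v, v ∈ e → v ∈ H ∨ v ∈ I := by
          intro e he v hv
          by_contra hc
          push_neg at hc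
          exact hout ⟨e, he, v, hv, hc⟩
        exfalso
        apply hcf H I
        refine ⟨⟨d, hdI⟩, hind, hN, Mbd, ?_, ?_, ?_⟩
        · exact ⟨fun e he => hM.1 e (hMbd_mem e he).1,
            fun e he f hf hef v hve hvf =>
              hM.2 e (hMbd_mem e he).1 f (hMbd_mem f hf).1 hef v hve hvf⟩
        · intro e he
          obtain ⟨x, y, rfl⟩ := sym2_exists e
          have hadj : G.Adj x y := hM.1 _ (hMbd_mem _ he).1
          have hxy : x ≠ y := hadj.ne
          have hxm : x ∈ s(x, y) := Sym2.mem_iff.mpr (Or.inl rfl)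
          have hym : y ∈ s(x, y) := Sym2.mem_iff.mpr (Or.inr rfl)
          rcases hout' _ he x hxm with hxH | hxI <;> rcases hout' _ he y hym with hyH | hyI
          · exact absurd ((huniqH _ he x hxH hxm).symm.trans (huniqH _ he y hyH hym)) hxy
          · exact ⟨x, hxH, y, hyI, rfl⟩
          · exact ⟨y, hyH, x, hxI, Sym2.eq_swap⟩
          · exact absurd hadj (hind x hxI y hyI)
        · intro a ha
          obtain ⟨e, he, hFe⟩ := hsurj a ha
          exact ⟨e, he, hFe ▸ (hF e he).2⟩
  omega
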